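/- Let X be a reflexive Banach space with the sequential Kadec–Klee property, let F be a Banach space and N ∈ ℕ. Then for every weakly sequentially continuous continuous N-homogeneous polynomial P from X to F with ‖P‖=1 and every ε>0 there exists η(ε,P)>0 such that whenever x in the unit sphere of X satisfies ‖P(x)‖ > 1−η(ε,P), there exists x₀ in the unit sphere of X with ‖P(x₀)‖ = 1 and ‖x₀−x‖ < ε. -/

import Mathlib

open Filter Topology

section Aux

open NormedSpace TopologicalSpace

/-- A nonzero continuous functional vanishing on a closed subspace avoiding a point. -/
lemma aux_vanish {𝕜 X : Type*} [RCLike 𝕜] [NormedAddCommGroup X] [NormedSpace 𝕜 X]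
    (Y : Submodule 𝕜 X) (hY : IsClosed (Y : Set X)) {x : X} (hx : x ∉ Y) :
    ∃ f : X →L[𝕜] 𝕜, (∀ y ∈ Y, f y = 0) ∧ f x ≠ 0 := by
  haveI : IsClosed (Y : Set X) := hY
  set Q : X →L[𝕜] X ⧸ Y := Y.mkQ.mkContinuous 1 (fun m => by
    simpa using Submodule.Quotient.norm_mk_le Y m)
  have hQx : Q x ≠ 0 := by
    simpa [Q, Submodule.Quotient.mk_eq_zero] using hx
  obtain ⟨g, hg1, hgx⟩ := exists_dual_vector 𝕜 (Q x) (norm_ne_zero_iff.mpr hQx)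
  refine ⟨g.comp Q, ?_, ?_⟩
  · intro y hy
    have : Q y = 0 := by simpa [Q, Submodule.Quotient.mk_eq_zero] using hy
    simp [this]
  · have : ‖Q x‖ ≠ 0 := by simpa using hQx
    simp only [ContinuousLinearMap.comp_apply, hgx]
    exact_mod_cast fun h => this (by exact_mod_cast RCLike.ofReal_eq_zero.mp h)

/-- If the dual of `Z` is separable, then `Z` is separable. -/
lemma aux_sep_of_dual_sep (𝕜 Z : Type*) [RCLike 𝕜] [NormedAddCommGroup Z] [NormedSpace 𝕜 Z]
    [SeparableSpace (StrongDual 𝕜 Z)] : SeparableSpace Z := by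
  obtain ⟨u, hu⟩ := exists_dense_seq (StrongDual 𝕜 Z)
  have hch : ∀ n : ℕ, ∃ z : Z, ‖z‖ ≤ 1 ∧ ‖u n‖ / 2 ≤ ‖(u n) z‖ := by
    intro n
    rcases eq_or_ne (u n) 0 with h | h
    · exact ⟨0, by simp [h]⟩
    · have hpos : 0 < ‖u n‖ := norm_pos_iff.mpr h
      obtain ⟨z, hz1, hz2⟩ := (u n).exists_lt_apply_of_lt_opNorm (half_lt_self hpos)
      exact ⟨z, hz1.le, hz2.le⟩
  choose z hz1 hz2 using hch
  set Y : Submodule 𝕜 Z := (Submodule.span 𝕜 (Set.range z)).topologicalClosure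
  have hYsep : IsSeparable (Y : Set Z) := by
    have : IsSeparable (Set.range z) := (Set.countable_range z).isSeparable
    exact this.span.closure
  have hYtop : Y = ⊤ := by
    by_contra h
    obtain ⟨x, hx⟩ : ∃ x : Z, x ∉ Y := by
      by_contra h2; push_neg at h2
      exact h (Submodule.eq_top_iff'.mpr h2)
    obtain ⟨f, hf0, hfx⟩ := aux_vanish Y (Submodule.isClosed_topologicalClosure _) hx
    have hfne : f ≠ 0 := fun h => hfx (by simp [h])
    have hfpos : 0 < ‖f‖ := norm_pos_iff.mpr hfne
    set g : StrongDual 𝕜 Z := (‖f‖⁻¹ : ℝ) • f with hg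
    have hgnorm : ‖g‖ = 1 := by
      rw [hg, norm_smul, norm_inv, norm_norm, inv_mul_cancel₀ hfpos.ne']
    have hg0 : ∀ y ∈ Y, g y = 0 := fun y hy => by simp [hg, hf0 y hy]
    obtain ⟨n, hn⟩ := Metric.denseRange_iff.mp hu g (1/4) (by norm_num)
    have hdist : ‖u n - g‖ < 1/4 := by
      rw [← dist_eq_norm, dist_comm]; exact hn
    have hun : 3/4 ≤ ‖u n‖ := by
      have h2 : ‖g‖ - ‖u n‖ ≤ ‖u n - g‖ := by
        have := norm_sub_norm_le g (u n)
        rwa [norm_sub_rev] at this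
      rw [hgnorm] at h2; linarith
    have hzY : z n ∈ Y := Submodule.le_topologicalClosure _ (Submodule.subset_span ⟨n, rfl⟩)
    have : ‖(u n) (z n)‖ ≤ 1/4 := by
      have : (u n) (z n) = (u n - g) (z n) := by simp [hg0 _ hzY]
      rw [this]
      calc ‖(u n - g) (z n)‖ ≤ ‖u n - g‖ * ‖z n‖ := (u n - g).le_opNorm _
        _ ≤ ‖u n - g‖ * 1 := mul_le_mul_of_nonneg_left (hz1 n) (norm_nonneg _)
        _ ≤ 1/4 := by rw [mul_one]; exact hdist.le
    have := hz2 n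
    linarith [this.trans ‹‖(u n) (z n)‖ ≤ 1/4›]
  have : IsSeparable (Set.univ : Set Z) := by
    have h : (Y : Set Z) = Set.univ := by rw [hYtop]; rfl
    rwa [h] at hYsep
  exact isSeparable_univ_iff.mp this

/-- A closed subspace of a reflexive space is reflexive. -/
lemma aux_subspace_refl {𝕜 X : Type*} [RCLike 𝕜] [NormedAddCommGroup X] [NormedSpace 𝕜 X]
    (hrefl : Function.Surjective (inclusionInDoubleDual 𝕜 X))
    (Y : Submodule 𝕜 X) (hY : IsClosed (Y : Set X)) :
    Function.Surjective (inclusionInDoubleDual 𝕜 ↥Y) := by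
  intro Λ
  set R : StrongDual 𝕜 X →L[𝕜] StrongDual 𝕜 ↥Y :=
    (ContinuousLinearMap.compSL ↥Y X 𝕜 (RingHom.id 𝕜) (RingHom.id 𝕜)).flip Y.subtypeL with hR
  have hRapp : ∀ (f : StrongDual 𝕜 X) (z : ↥Y), R f z = f z := fun f z => rfl
  obtain ⟨x, hx⟩ := hrefl (Λ.comp R)
  have hfx : ∀ f : StrongDual 𝕜 X, f x = Λ (R f) := by
    intro f
    have h := congrArg (fun (T : StrongDual 𝕜 (StrongDual 𝕜 X)) => T f) hx
    simpa using h
  have hxY : x ∈ Y := by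
    by_contra hxY
    obtain ⟨f, hf0, hfx0⟩ := aux_vanish Y hY hxY
    have : R f = 0 := by ext z; exact hf0 z z.2
    exact hfx0 (by rw [hfx f, this, map_zero])
  refine ⟨⟨x, hxY⟩, ?_⟩
  ext g
  obtain ⟨f, hf, -⟩ := exists_extension_norm_eq Y g
  have hRf : R f = g := by ext z; exact hf z
  calc inclusionInDoubleDual 𝕜 ↥Y ⟨x, hxY⟩ g = g ⟨x, hxY⟩ := rfl
    _ = f x := (hf ⟨x, hxY⟩).symm
    _ = Λ (R f) := hfx f
    _ = Λ g := by rw [hRf]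

/-- Weak sequential compactness of the unit ball in a reflexive space. -/
lemma aux_weak_seq_compact {𝕜 X : Type*} [RCLike 𝕜] [NormedAddCommGroup X] [NormedSpace 𝕜 X]
    [CompleteSpace X]
    (hrefl : Function.Surjective (inclusionInDoubleDual 𝕜 X))
    (u : ℕ → X) (hu : ∀ n, ‖u n‖ ≤ 1) :
    ∃ (φ : ℕ → ℕ) (x : X), StrictMono φ ∧ ‖x‖ ≤ 1 ∧
      ∀ f : X →L[𝕜] 𝕜, Tendsto (fun k => f (u (φ k))) atTop (𝓝 (f x)) := by
  classical
  set Y : Submodule 𝕜 X := (Submodule.span 𝕜 (Set.range u)).topologicalClosure with hYdef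
  have hYclosed : IsClosed (Y : Set X) := Submodule.isClosed_topologicalClosure _
  haveI : CompleteSpace ↥Y := hYclosed.completeSpace_coe
  have hYsep : IsSeparable (Y : Set X) := ((Set.countable_range u).isSeparable.span).closure
  haveI hYsepT : SeparableSpace ↥Y := hYsep.separableSpace
  have hYrefl := aux_subspace_refl hrefl Y hYclosed
  haveI : SeparableSpace (StrongDual 𝕜 (StrongDual 𝕜 ↥Y)) := by
    have hc : Continuous (inclusionInDoubleDual 𝕜 ↥Y) := (inclusionInDoubleDual 𝕜 ↥Y).continuous
    have := isSeparable_range hc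
    have hr : Set.range (inclusionInDoubleDual 𝕜 ↥Y) = Set.univ := Set.range_eq_univ.mpr hYrefl
    rw [hr] at this
    exact isSeparable_univ_iff.mp this
  haveI : SeparableSpace (StrongDual 𝕜 ↥Y) := aux_sep_of_dual_sep 𝕜 (StrongDual 𝕜 ↥Y)
  have huY : ∀ n, u n ∈ Y :=
    fun n => Submodule.le_topologicalClosure _ (Submodule.subset_span ⟨n, rfl⟩)
  set y : ℕ → ↥Y := fun n => ⟨u n, huY n⟩ with hydef
  have hynorm : ∀ n, ‖y n‖ ≤ 1 := fun n => hu n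
  haveI : Nonempty (StrongDual 𝕜 ↥Y) := ⟨0⟩
  obtain ⟨g, hg⟩ := exists_dense_seq (StrongDual 𝕜 ↥Y)
  set S : Set (ℕ → 𝕜) := Set.pi Set.univ (fun j => Metric.closedBall (0:𝕜) ‖g j‖) with hS
  have hScomp : IsCompact S := isCompact_univ_pi (fun j => ProperSpace.isCompact_closedBall _ _)
  set v : ℕ → (ℕ → 𝕜) := fun n j => g j (y n) with hv
  have hvS : ∀ n, v n ∈ S := by
    intro n j _
    simp only [Metric.mem_closedBall, dist_zero_right]
    calc ‖g j (y n)‖ ≤ ‖g j‖ * ‖y n‖ := (g j).le_opNorm _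
      _ ≤ ‖g j‖ * 1 := mul_le_mul_of_nonneg_left (hynorm n) (norm_nonneg _)
      _ = ‖g j‖ := mul_one _
  obtain ⟨L, -, φ, hφ, hLtend⟩ := hScomp.tendsto_subseq hvS
  have hcoord : ∀ j, Tendsto (fun k => g j (y (φ k))) atTop (𝓝 (L j)) := by
    intro j
    have := (continuous_apply j).continuousAt.tendsto.comp hLtend
    exact this
  have hCauchy : ∀ h : StrongDual 𝕜 ↥Y, CauchySeq (fun k => h (y (φ k))) := by
    intro h
    rw [Metric.cauchySeq_iff]
    intro ε hε
    obtain ⟨j, hj⟩ := Metric.denseRange_iff.mp hg h (ε/4) (by linarith)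
    obtain ⟨K, hK⟩ := Metric.cauchySeq_iff.mp (hcoord j).cauchySeq (ε/4) (by linarith)
    refine ⟨K, fun m hm n hn => ?_⟩
    have hb : ∀ p : ℕ, dist (h (y (φ p))) (g j (y (φ p))) ≤ ε/4 := by
      intro p
      rw [dist_eq_norm]
      calc ‖h (y (φ p)) - g j (y (φ p))‖ = ‖(h - g j) (y (φ p))‖ := by simp
        _ ≤ ‖h - g j‖ * ‖y (φ p)‖ := (h - g j).le_opNorm _
        _ ≤ ‖h - g j‖ * 1 := mul_le_mul_of_nonneg_left (hynorm _) (norm_nonneg _)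
        _ ≤ ε/4 := by
            rw [mul_one, ← dist_eq_norm, dist_comm]
            exact (dist_comm (g j) h ▸ hj).le
    calc dist (h (y (φ m))) (h (y (φ n)))
        ≤ dist (h (y (φ m))) (g j (y (φ m))) + dist (g j (y (φ m))) (g j (y (φ n)))
            + dist (g j (y (φ n))) (h (y (φ n))) := dist_triangle4 _ _ _ _
      _ < ε := by
          have h1 := hb m
          have h2 := hK m hm n hn
          have h3 : dist (g j (y (φ n))) (h (y (φ n))) ≤ ε/4 := by
            rw [dist_comm]; exact hb n
          linarith
  have hconv : ∀ h : StrongDual 𝕜 ↥Y, ∃ c : 𝕜, Tendsto (fun k => h (y (φ k))) atTop (𝓝 c) :=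
    fun h => cauchySeq_tendsto_of_complete (hCauchy h)
  choose c hc using hconv
  have hcadd : ∀ h₁ h₂ : StrongDual 𝕜 ↥Y, c (h₁ + h₂) = c h₁ + c h₂ := by
    intro h₁ h₂
    have h2 : Tendsto (fun k => (h₁ + h₂) (y (φ k))) atTop (𝓝 (c h₁ + c h₂)) := by
      simpa using (hc h₁).add (hc h₂)
    exact tendsto_nhds_unique (hc (h₁ + h₂)) h2
  have hcsmul : ∀ (a : 𝕜) (h : StrongDual 𝕜 ↥Y), c (a • h) = a • c h := by
    intro a h
    have h2 : Tendsto (fun k => (a • h) (y (φ k))) atTop (𝓝 (a • c h)) := by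
      simpa using (hc h).const_smul a
    exact tendsto_nhds_unique (hc (a • h)) h2
  set Λlin : StrongDual 𝕜 ↥Y →ₗ[𝕜] 𝕜 :=
    { toFun := c, map_add' := hcadd, map_smul' := hcsmul } with hΛlin
  have hcbound : ∀ h : StrongDual 𝕜 ↥Y, ‖c h‖ ≤ ‖h‖ := by
    intro h
    have hn : Tendsto (fun k => ‖h (y (φ k))‖) atTop (𝓝 ‖c h‖) := (hc h).norm
    refine le_of_tendsto hn (Eventually.of_forall fun k => ?_)
    calc ‖h (y (φ k))‖ ≤ ‖h‖ * ‖y (φ k)‖ := h.le_opNorm _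
      _ ≤ ‖h‖ * 1 := mul_le_mul_of_nonneg_left (hynorm _) (norm_nonneg _)
      _ = ‖h‖ := mul_one _
  set Λ : StrongDual 𝕜 (StrongDual 𝕜 ↥Y) := Λlin.mkContinuous 1 (fun h => by rw [one_mul]; exact hcbound h) with hΛ
  obtain ⟨y₀, hy₀⟩ := hYrefl Λ
  have hy₀app : ∀ h : StrongDual 𝕜 ↥Y, h y₀ = c h := by
    intro h
    have := congrArg (fun (T : StrongDual 𝕜 (StrongDual 𝕜 ↥Y)) => T h) hy₀
    exact this
  refine ⟨φ, (y₀ : X), hφ, ?_, ?_⟩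
  · refine norm_le_dual_bound 𝕜 _ zero_le_one (fun f => ?_)
    have hfY : Tendsto (fun k => (f.comp Y.subtypeL) (y (φ k))) atTop
        (𝓝 ((f.comp Y.subtypeL) y₀)) := by
      rw [hy₀app]; exact hc _
    have hn : Tendsto (fun k => ‖f (u (φ k))‖) atTop (𝓝 ‖f (y₀ : X)‖) := by
      simpa using hfY.norm
    refine le_of_tendsto hn (Eventually.of_forall fun k => ?_)
    calc ‖f (u (φ k))‖ ≤ ‖f‖ * ‖u (φ k)‖ := f.le_opNorm _
      _ ≤ ‖f‖ * 1 := mul_le_mul_of_nonneg_left (hu _) (norm_nonneg _)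
      _ = 1 * ‖f‖ := by ring
  · intro f
    have hfY : Tendsto (fun k => (f.comp Y.subtypeL) (y (φ k))) atTop
        (𝓝 ((f.comp Y.subtypeL) y₀)) := by
      rw [hy₀app]; exact hc _
    simpa using hfY

end Aux

/-- The norm of the `N`-homogeneous polynomial `x ↦ A(x,…,x)` associated to a continuous
`N`-linear map `A`, namely `sup {‖A(x,…,x)‖ : ‖x‖ ≤ 1}`. -/
noncomputable def polyNorm {𝕜 X Z : Type*} [RCLike 𝕜] [NormedAddCommGroup X] [NormedSpace 𝕜 X]
    [NormedAddCommGroup Z] [NormedSpace 𝕜 Z] {N : ℕ}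
    (A : ContinuousMultilinearMap 𝕜 (fun _ : Fin N => X) Z) : ℝ :=
  sSup {r : ℝ | ∃ x : X, ‖x‖ ≤ 1 ∧ r = ‖A (fun _ => x)‖}

lemma poly_le {𝕜 X Z : Type*} [RCLike 𝕜] [NormedAddCommGroup X] [NormedSpace 𝕜 X]
    [NormedAddCommGroup Z] [NormedSpace 𝕜 Z] {N : ℕ}
    (A : ContinuousMultilinearMap 𝕜 (fun _ : Fin N => X) Z) (hA : polyNorm A = 1)
    {z : X} (hz : ‖z‖ ≤ 1) : ‖A (fun _ => z)‖ ≤ 1 := by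
  have hbdd : BddAbove {r : ℝ | ∃ x : X, ‖x‖ ≤ 1 ∧ r = ‖A (fun _ => x)‖} := by
    refine ⟨‖A‖, fun r hr => ?_⟩
    obtain ⟨x, hx, rfl⟩ := hr
    calc ‖A (fun _ => x)‖ ≤ ‖A‖ * ∏ _i : Fin N, ‖x‖ := A.le_opNorm _
      _ = ‖A‖ * ‖x‖ ^ N := by simp
      _ ≤ ‖A‖ * 1 := mul_le_mul_of_nonneg_left (pow_le_one₀ (norm_nonneg _) hx) A.opNorm_nonneg
      _ = ‖A‖ := mul_one _
  have : ‖A (fun _ => z)‖ ≤ polyNorm A := le_csSup hbdd ⟨z, hz, rfl⟩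
  rwa [hA] at this

lemma poly_norm_one_of {𝕜 X Z : Type*} [RCLike 𝕜] [NormedAddCommGroup X] [NormedSpace 𝕜 X]
    [NormedAddCommGroup Z] [NormedSpace 𝕜 Z] {N : ℕ} (hN : N ≠ 0)
    (A : ContinuousMultilinearMap 𝕜 (fun _ : Fin N => X) Z) (hA : polyNorm A = 1)
    {x : X} (hxle : ‖x‖ ≤ 1) (hAx : ‖A (fun _ => x)‖ = 1) : ‖x‖ = 1 := by
  rcases eq_or_lt_of_le hxle with h | h
  · exact h
  exfalso
  rcases eq_or_ne x 0 with rfl | hx0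
  · have i : Fin N := ⟨0, Nat.pos_of_ne_zero hN⟩
    have : A (fun _ => (0:X)) = 0 := A.map_coord_zero i rfl
    rw [this] at hAx
    simp at hAx
  · have ht : 0 < ‖x‖ := norm_pos_iff.mpr hx0
    set t : ℝ := ‖x‖
    set c : 𝕜 := (RCLike.ofReal t : 𝕜)⁻¹ with hcdef
    have hc : ‖c‖ = t⁻¹ := by
      rw [hcdef, norm_inv, RCLike.norm_ofReal, abs_of_pos ht]
    have hcx : ‖c • x‖ = 1 := by
      rw [norm_smul, hc, inv_mul_cancel₀ ht.ne']
    have hmap : A (fun _ => c • x) = (c ^ N) • A (fun _ => x) := by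
      have := A.map_smul_univ (fun _ : Fin N => c) (fun _ : Fin N => x)
      simpa using this
    have hnorm : ‖A (fun _ => c • x)‖ = (t⁻¹) ^ N := by
      rw [hmap, norm_smul, norm_pow, hc, hAx, mul_one]
    have hle := poly_le A hA hcx.le
    rw [hnorm] at hle
    have : (1:ℝ) < t⁻¹ ^ N := by
      have h1 : 1 < t⁻¹ := (one_lt_inv₀ ht).mpr h
      exact one_lt_pow₀ h1 hN
    linarith

/-- Let `X` be a reflexive Banach space (the canonical embedding into the
bidual is surjective) with the sequential Kadec–Klee property, and `F` a Banach space. Then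
every weakly sequentially continuous norm-one `N`-homogeneous polynomial `P : X → F`
(represented by an `N`-linear map `A` via `P x = A(x,…,x)`) satisfies the local
Bishop–Phelps–Bollobás point estimate near its norm-attaining set. -/
theorem stmt_13 {𝕜 X F : Type*} [RCLike 𝕜] [NormedAddCommGroup X] [NormedSpace 𝕜 X]
    [CompleteSpace X] [NormedAddCommGroup F] [NormedSpace 𝕜 F] [CompleteSpace F]
    (hrefl : Function.Surjective (NormedSpace.inclusionInDoubleDual 𝕜 X))
    (hKK : ∀ (u : ℕ → X) (x : X),
      (∀ f : X →L[𝕜] 𝕜, Tendsto (fun n => f (u n)) atTop (nhds (f x))) →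
      Tendsto (fun n => ‖u n‖) atTop (nhds ‖x‖) →
      Tendsto u atTop (nhds x))
    {N : ℕ} (A : ContinuousMultilinearMap 𝕜 (fun _ : Fin N => X) F)
    (hwsc : ∀ (u : ℕ → X) (x : X),
      (∀ f : X →L[𝕜] 𝕜, Tendsto (fun n => f (u n)) atTop (nhds (f x))) →
      Tendsto (fun n => A (fun _ => u n)) atTop (nhds (A (fun _ => x))))
    (hA : polyNorm A = 1) (ε : ℝ) (hε : 0 < ε) :
    ∃ η > (0 : ℝ), ∀ x : X, ‖x‖ = 1 → ‖A (fun _ => x)‖ > 1 - η →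
      ∃ x₀ : X, ‖x₀‖ = 1 ∧ ‖A (fun _ => x₀)‖ = 1 ∧ ‖x₀ - x‖ < ε := by
  rcases eq_or_ne N 0 with rfl | hN
  · -- degenerate constant case
    refine ⟨1, one_pos, fun x hx _ => ⟨x, hx, ?_, by simpa using hε⟩⟩
    have hset : {r : ℝ | ∃ z : X, ‖z‖ ≤ 1 ∧ r = ‖A (fun _ => z)‖} = {‖A (fun _ => x)‖} := by
      ext r
      constructor
      · rintro ⟨z, -, rfl⟩
        have : (fun _ : Fin 0 => z) = (fun _ : Fin 0 => x) := funext fun i => i.elim0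
        simp [this]
      · rintro rfl
        exact ⟨x, by simp [hx], by
          have : (fun _ : Fin 0 => x) = (fun _ : Fin 0 => x) := rfl
          rfl⟩
    have := hA
    rw [polyNorm, hset, csSup_singleton] at this
    exact this
  · by_contra hcon
    push_neg at hcon
    have hsel : ∀ n : ℕ, ∃ x : X, ‖x‖ = 1 ∧ ‖A (fun _ => x)‖ > 1 - 1/(n+1) ∧
        ∀ x₀ : X, ‖x₀‖ = 1 → ‖A (fun _ => x₀)‖ = 1 → ε ≤ ‖x₀ - x‖ := by
      intro n
      obtain ⟨x, hx1, hx2, hx3⟩ := hcon (1/(n+1)) (by positivity)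
      exact ⟨x, hx1, hx2, hx3⟩
    choose w hw1 hw2 hw3 using hsel
    obtain ⟨φ, x, hφ, hxle, hweak⟩ := aux_weak_seq_compact hrefl w (fun n => (hw1 n).le)
    have hP : Tendsto (fun k => A (fun _ => w (φ k))) atTop (𝓝 (A (fun _ => x))) :=
      hwsc (fun k => w (φ k)) x hweak
    have h1 : Tendsto (fun k => ‖A (fun _ => w (φ k))‖) atTop (𝓝 ‖A (fun _ => x)‖) := hP.norm
    have hAx1 : ‖A (fun _ => x)‖ = 1 := by
      have hup : ‖A (fun _ => x)‖ ≤ 1 := poly_le A hA hxle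
      have hlow : (1:ℝ) ≤ ‖A (fun _ => x)‖ := by
        have h2 : Tendsto (fun k => 1 - 1/((φ k : ℝ)+1)) atTop (𝓝 1) := by
          have hφtop : Tendsto φ atTop atTop := hφ.tendsto_atTop
          have : Tendsto (fun n : ℕ => 1/((n:ℝ)+1)) atTop (𝓝 0) :=
            tendsto_one_div_add_atTop_nhds_zero_nat
          have := (this.comp hφtop).const_sub 1
          simpa using this
        refine le_of_tendsto_of_tendsto' h2 h1 (fun k => ?_)
        exact (hw2 (φ k)).le
      linarith
    have hx1 : ‖x‖ = 1 := poly_norm_one_of hN A hA hxle hAx1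
    have hnorms : Tendsto (fun k => ‖w (φ k)‖) atTop (𝓝 ‖x‖) := by
      have : (fun k => ‖w (φ k)‖) = fun _ => (1:ℝ) := funext fun k => hw1 (φ k)
      rw [this, hx1]
      exact tendsto_const_nhds
    have hconv : Tendsto (fun k => w (φ k)) atTop (𝓝 x) := hKK (fun k => w (φ k)) x hweak hnorms
    have hd : Tendsto (fun k => ‖x - w (φ k)‖) atTop (𝓝 0) := by
      have := (tendsto_const_nhds (x := x) (f := atTop)).sub hconv
      simpa using this.norm
    have hev : ∀ᶠ k in atTop, ‖x - w (φ k)‖ < ε := by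
      have := hd.eventually (gt_mem_nhds hε)
      simpa using this
    obtain ⟨k, hk⟩ := hev.exists
    exact absurd hk (not_lt.mpr (hw3 (φ k) x hx1 hAx1))
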